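/- Let x_i, x_j, x_k ∈ ℝ² with x_i ≠ x_j, x_k ≠ x_i, x_k ≠ x_j, write δ_ij = ‖x_i−x_j‖, and define I_b = −(1/2)·[(x_i−x_j)ᵀφ_b(x_k−x_i) + (x_j−x_i)ᵀφ_b(x_k−x_j)]. Let D ≥ δ_ij be any real number (in the paper, D = δ_{C,max}, the maximum pairwise distance over the colliding set C containing i and j). If ‖x_k−x_i‖ ≥ ℓ_b and ‖x_k−x_j‖ ≤ ℓ_b, then I_b ≥ −(m_b/2)·(1/ℓ_b − 1/(ℓ_b + D))·δ_ij. -/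

import Mathlib

open scoped RealInnerProductSpace

noncomputable section

/-- The plane ℝ². -/
abbrev E2 : Type := EuclideanSpace ℝ (Fin 2)

/-- Attraction function `φ_a(x) = -m_a x`. -/
def phiA (ma : ℝ) (v : E2) : E2 := (-ma) • v

/-- Bounded repulsion function `φ_b` (with `M_b = m_b / ℓ_b`). -/
def phiB (mb lb : ℝ) (v : E2) : E2 :=
  if lb < ‖v‖ then (mb / ‖v‖ ^ 2) • v else ((mb / lb) / ‖v‖) • v

/-- The function `g` with `g(0) = 0` and `g(d) = exp(-1/d)` for `d ≠ 0`. -/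
def gfun (d : ℝ) : ℝ := if d = 0 then 0 else Real.exp (-(1 / d))

/- Shepherd-to-sheep force `f_y` (with `γ₂ = γ₁ exp(1/ℓ_y)`), `f_y(y, y) = 0`. -/
open Classical in
def fy (γ1 ly : ℝ) (x y : E2) : E2 :=
  if x = y then 0
  else if ly < ‖x - y‖ then (γ1 / ‖x - y‖ ^ 2) • (x - y)
  else (γ1 * Real.exp (1 / ly) * gfun ‖x - y‖ / ‖x - y‖ ^ 2) • (x - y)

/-- if `‖x_k - x_i‖ ≥ ℓ_b` and `‖x_k - x_j‖ ≤ ℓ_b`, then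
`I_b ≥ -(m_b/2)(1/ℓ_b - 1/(ℓ_b + D)) δ_ij` for any `D ≥ δ_ij`. -/
lemma key (mb lb A B δ D s : ℝ) (hmb : 0 < mb) (hlb : 0 < lb)
    (hA : lb ≤ A) (hB : 0 < B) (hBl : B ≤ lb) (hδ : 0 < δ) (hD : δ ≤ D)
    (hABδ : A ≤ B + δ) (hs : s ≤ A * B) :
    -(1/2) * (mb / A ^ 2 * (s - A ^ 2) + (mb / lb) / B * (s - B ^ 2)) ≥
      -(mb / 2) * (1 / lb - 1 / (lb + D)) * δ := by
  have hA0 : 0 < A := lt_of_lt_of_le hlb hA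
  have hlD : 0 < lb + D := by linarith
  have h1 : mb / A ^ 2 * (s - A ^ 2) ≤ mb * ((B - A) / A) := by
    rw [div_mul_eq_mul_div, mul_div_assoc]
    refine mul_le_mul_of_nonneg_left ?_ hmb.le
    rw [div_le_div_iff₀ (by positivity) hA0]
    nlinarith
  have h2 : (mb / lb) / B * (s - B ^ 2) ≤ mb * ((A - B) / lb) := by
    rw [div_div, div_mul_eq_mul_div, mul_div_assoc]
    refine mul_le_mul_of_nonneg_left ?_ hmb.le
    rw [div_le_div_iff₀ (by positivity) hlb]
    nlinarith
  have h3 : (B - A) / A + (A - B) / lb ≤ (1 / lb - 1 / (lb + D)) * δ := by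
    rw [div_add_div _ _ hA0.ne' hlb.ne', div_le_iff₀ (by positivity)]
    have hAle : A ≤ lb + D := by linarith
    have e : (1 / lb - 1 / (lb + D)) = D / (lb * (lb + D)) := by
      field_simp
      ring
    rw [e]
    rw [div_mul_eq_mul_div, div_mul_eq_mul_div, le_div_iff₀ (by positivity)]
    nlinarith [mul_nonneg (mul_nonneg (by linarith : (0:ℝ) ≤ δ - (A - B)) (by linarith : (0:ℝ) ≤ A - lb)) hlD.le,
      mul_nonneg (mul_nonneg hlb.le (by linarith : (0:ℝ) ≤ lb + D - A)) hδ.le,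
      mul_pos hlb hA0, mul_pos hA0 hlD]
  nlinarith [mul_le_mul_of_nonneg_left h3 hmb.le]

theorem statement6 (mb lb : ℝ) (hmb : 0 < mb) (hlb : 0 < lb)
    (xi xj xk : E2) (hij : xi ≠ xj) (hki : xk ≠ xi) (hkj : xk ≠ xj)
    (D : ℝ) (hD : ‖xi - xj‖ ≤ D)
    (hi : lb ≤ ‖xk - xi‖) (hj : ‖xk - xj‖ ≤ lb) :
    -(1 / 2) * (⟪xi - xj, phiB mb lb (xk - xi)⟫ + ⟪xj - xi, phiB mb lb (xk - xj)⟫) ≥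
      -(mb / 2) * (1 / lb - 1 / (lb + D)) * ‖xi - xj‖ := by
  have hB0 : (0:ℝ) < ‖xk - xj‖ := norm_pos_iff.mpr (sub_ne_zero.mpr hkj)
  have hδ0 : (0:ℝ) < ‖xi - xj‖ := norm_pos_iff.mpr (sub_ne_zero.mpr hij)
  have hφa : phiB mb lb (xk - xi) = (mb / ‖xk - xi‖ ^ 2) • (xk - xi) := by
    unfold phiB
    split_ifs with h
    · rfl
    · have hAeq : ‖xk - xi‖ = lb := le_antisymm (not_lt.mp h) hi
      rw [hAeq, sq, ← div_div]
  have hφb : phiB mb lb (xk - xj) = ((mb / lb) / ‖xk - xj‖) • (xk - xj) := by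
    unfold phiB
    rw [if_neg (not_lt.mpr hj)]
  rw [hφa, hφb, real_inner_smul_right, real_inner_smul_right]
  have hp : ⟪xi - xj, xk - xi⟫ = ⟪xk - xi, xk - xj⟫ - ‖xk - xi‖ ^ 2 := by
    have e : xi - xj = (xk - xj) - (xk - xi) := by abel
    rw [e, inner_sub_left, real_inner_comm, ← real_inner_self_eq_norm_sq]
  have hq : ⟪xj - xi, xk - xj⟫ = ⟪xk - xi, xk - xj⟫ - ‖xk - xj‖ ^ 2 := by
    have e : xj - xi = (xk - xi) - (xk - xj) := by abel
    rw [e, inner_sub_left, ← real_inner_self_eq_norm_sq]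
  rw [hp, hq]
  have hABδ : ‖xk - xi‖ ≤ ‖xk - xj‖ + ‖xi - xj‖ := by
    have e : xk - xi = (xk - xj) + (xj - xi) := by abel
    calc ‖xk - xi‖ = ‖(xk - xj) + (xj - xi)‖ := by rw [← e]
      _ ≤ ‖xk - xj‖ + ‖xj - xi‖ := norm_add_le _ _
      _ = ‖xk - xj‖ + ‖xi - xj‖ := by rw [norm_sub_rev xj xi]
  exact key mb lb _ _ _ D _ hmb hlb hi hB0 hj hδ0 hD hABδ (real_inner_le_norm _ _)
end
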